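/- Let k be a positive integer such that A_k = {n ≥ 1 : gcd(n, F_n) = k} is nonempty. Define L_k as the union of the set of primes p dividing k and the set {ℓ(kp)/ℓ(k) : p prime, p ∤ k}. Then A_k = {ℓ(k)·m : m ∈ N(L_k)}, where N(L_k) = {m ≥ 1 : s ∤ m for all s ∈ L_k}. -/

import Mathlib

open scoped BigOperators

/-- `fibZ m` is the rank of appearance of `m`: the least positive `n` with `m ∣ F_n`. -/
noncomputable def fibZ (m : ℕ) : ℕ := sInf {n : ℕ | 0 < n ∧ m ∣ Nat.fib n}

/-- `fibL m = lcm(m, z(m))`. -/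
noncomputable def fibL (m : ℕ) : ℕ := Nat.lcm m (fibZ m)

/-- `countIn S x` is the number of elements of `S` in `[1, x]`. -/
noncomputable def countIn (S : Set ℕ) (x : ℝ) : ℕ :=
  (S ∩ {n : ℕ | 1 ≤ n ∧ (n : ℝ) ≤ x}).ncard

/-- `S` has asymptotic density `a`. -/
def HasDensity (S : Set ℕ) (a : ℝ) : Prop :=
  Filter.Tendsto (fun x : ℝ => (countIn S x : ℝ) / x) Filter.atTop (nhds a)

/-- `fibA k` is the set of positive integers `n` with `gcd(n, F_n) = k`. -/
def fibA (k : ℕ) : Set ℕ := {n : ℕ | 0 < n ∧ Nat.gcd n (Nat.fib n) = k}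
lemma exists_pos_dvd_fib (m : ℕ) (hm : 0 < m) : ∃ n, 0 < n ∧ m ∣ Nat.fib n := by
  haveI : NeZero m := ⟨hm.ne'⟩
  set f : ℕ → ZMod m × ZMod m := fun n => ((Nat.fib n : ZMod m), (Nat.fib (n+1) : ZMod m)) with hf
  have hstep : ∀ a b : ℕ, f (a+1) = f (b+1) → f a = f b := by
    intro a b h
    have h1 : (Nat.fib (a+1) : ZMod m) = Nat.fib (b+1) := congrArg Prod.fst h
    have h2 : (Nat.fib (a+2) : ZMod m) = Nat.fib (b+2) := congrArg Prod.snd h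
    have ha : (Nat.fib a : ZMod m) = (Nat.fib (a+2) : ZMod m) - Nat.fib (a+1) := by
      rw [Nat.fib_add_two]; push_cast; ring
    have hb : (Nat.fib b : ZMod m) = (Nat.fib (b+2) : ZMod m) - Nat.fib (b+1) := by
      rw [Nat.fib_add_two]; push_cast; ring
    simp only [hf, Prod.mk.injEq]
    exact ⟨by rw [ha, hb, h1, h2], h1⟩
  have hback : ∀ d a b : ℕ, f (a+d) = f (b+d) → f a = f b := by
    intro d
    induction d with
    | zero => intro a b h; simpa using h
    | succ d ih =>
      intro a b h
      refine hstep a b (ih (a+1) (b+1) ?_)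
      have e1 : a + 1 + d = a + (d+1) := by omega
      have e2 : b + 1 + d = b + (d+1) := by omega
      rw [e1, e2]; exact h
  obtain ⟨i, j, hne, hij⟩ := Finite.exists_ne_map_eq_of_infinite f
  rcases Nat.lt_or_ge i j with hlt | hge
  · refine ⟨j - i, by omega, ?_⟩
    have := hback i 0 (j - i) (by simpa [Nat.sub_add_cancel hlt.le] using hij)
    have h0 : (Nat.fib (j-i) : ZMod m) = (Nat.fib 0 : ZMod m) := (congrArg Prod.fst this).symm
    rw [Nat.fib_zero, Nat.cast_zero] at h0
    exact (ZMod.natCast_eq_zero_iff _ _).mp h0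
  · have hlt : j < i := by omega
    refine ⟨i - j, by omega, ?_⟩
    have := hback j 0 (i - j) (by simpa [Nat.sub_add_cancel hlt.le] using hij.symm)
    have h0 : (Nat.fib (i-j) : ZMod m) = (Nat.fib 0 : ZMod m) := (congrArg Prod.fst this).symm
    rw [Nat.fib_zero, Nat.cast_zero] at h0
    exact (ZMod.natCast_eq_zero_iff _ _).mp h0

lemma fibZ_mem (m : ℕ) (hm : 0 < m) : 0 < fibZ m ∧ m ∣ Nat.fib (fibZ m) :=
  Nat.sInf_mem (exists_pos_dvd_fib m hm)

lemma fibZ_pos (m : ℕ) (hm : 0 < m) : 0 < fibZ m := (fibZ_mem m hm).1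

lemma dvd_fib_fibZ (m : ℕ) (hm : 0 < m) : m ∣ Nat.fib (fibZ m) := (fibZ_mem m hm).2

lemma dvd_fib_iff (m n : ℕ) (hm : 0 < m) (hn : 0 < n) : m ∣ Nat.fib n ↔ fibZ m ∣ n := by
  constructor
  · intro h
    have hz := dvd_fib_fibZ m hm
    have hzpos := fibZ_pos m hm
    have hg : m ∣ Nat.fib (Nat.gcd n (fibZ m)) := by
      rw [Nat.fib_gcd]; exact Nat.dvd_gcd h hz
    have hmem : Nat.gcd n (fibZ m) ∈ {n : ℕ | 0 < n ∧ m ∣ Nat.fib n} :=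
      ⟨Nat.gcd_pos_of_pos_left _ hn, hg⟩
    have hle : fibZ m ≤ Nat.gcd n (fibZ m) := Nat.sInf_le hmem
    have hge : Nat.gcd n (fibZ m) ∣ fibZ m := Nat.gcd_dvd_right _ _
    have : Nat.gcd n (fibZ m) = fibZ m := Nat.le_antisymm (Nat.le_of_dvd hzpos hge) hle
    rw [← this]; exact Nat.gcd_dvd_left _ _
  · intro h
    exact (dvd_fib_fibZ m hm).trans (Nat.fib_dvd _ _ h)

lemma modeq_add_mul_self (n x y : ℤ) : x + y * n ≡ x [ZMOD n] :=
  (Int.modEq_iff_dvd.mpr ⟨-y, by ring⟩)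

lemma fibL_pos (m : ℕ) (hm : 0 < m) : 0 < fibL m :=
  Nat.lcm_pos hm (fibZ_pos m hm)

lemma dvd_gcd_fib_iff (d n : ℕ) (hd : 0 < d) (hn : 0 < n) :
    d ∣ Nat.gcd n (Nat.fib n) ↔ fibL d ∣ n := by
  rw [Nat.dvd_gcd_iff, dvd_fib_iff d n hd hn, fibL, Nat.lcm_dvd_iff]

lemma fibZ_dvd_fibZ (a b : ℕ) (ha : 0 < a) (hab : a ∣ b) (hb : 0 < b) : fibZ a ∣ fibZ b := by
  rw [← dvd_fib_iff a _ ha (fibZ_pos b hb)]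
  exact hab.trans (dvd_fib_fibZ b hb)

lemma fibL_dvd_fibL (a b : ℕ) (ha : 0 < a) (hab : a ∣ b) (hb : 0 < b) : fibL a ∣ fibL b := by
  refine Nat.lcm_dvd (hab.trans (Nat.dvd_lcm_left _ _)) ?_
  exact (fibZ_dvd_fibZ a b ha hab hb).trans (Nat.dvd_lcm_right _ _)

/-- Key congruence: `F_{r(n+1)} ≡ (n+1) F_{r+1}^n F_r` and `F_{r(n+1)+1} ≡ F_{r+1}^{n+1}`
modulo `F_r^2`, for `r = s+1`. -/
lemma fib_mul_modeq (s n : ℕ) :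
    ((Nat.fib ((s+1)*(n+1)) : ℤ) ≡ (n+1) * (Nat.fib (s+2))^n * Nat.fib (s+1) [ZMOD (Nat.fib (s+1))^2]) ∧
    ((Nat.fib ((s+1)*(n+1)+1) : ℤ) ≡ (Nat.fib (s+2))^(n+1) [ZMOD (Nat.fib (s+1))^2]) := by
  set F : ℤ := (Nat.fib (s+1) : ℤ) with hF
  set c : ℤ := (Nat.fib (s+2) : ℤ) with hc
  induction n with
  | zero =>
    constructor
    · simpa [hF] using Int.ModEq.refl _
    · simpa [hc] using Int.ModEq.refl _
  | succ n ih =>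
    obtain ⟨ihA, ihB⟩ := ih
    have hfs : (Nat.fib s : ℤ) = c - F := by
      rw [hc, hF]
      have : Nat.fib (s+2) = Nat.fib s + Nat.fib (s+1) := Nat.fib_add_two
      push_cast [this]; ring
    have hA2 : (s+1)*(n+2) = (s+1)*(n+1) + s + 1 := by ring
    have hB2 : (s+1)*(n+2)+1 = (s+1)*(n+1) + (s+1) + 1 := by ring
    have addA : (Nat.fib ((s+1)*(n+2)) : ℤ)
        = Nat.fib ((s+1)*(n+1)) * Nat.fib s + Nat.fib ((s+1)*(n+1)+1) * Nat.fib (s+1) := by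
      rw [hA2, Nat.fib_add]; push_cast; ring
    have addB : (Nat.fib ((s+1)*(n+2)+1) : ℤ)
        = Nat.fib ((s+1)*(n+1)) * Nat.fib (s+1) + Nat.fib ((s+1)*(n+1)+1) * Nat.fib (s+2) := by
      rw [hB2, Nat.fib_add]; push_cast; ring
    constructor
    · calc (Nat.fib ((s+1)*(n+2)) : ℤ)
          = Nat.fib ((s+1)*(n+1)) * (c - F) + Nat.fib ((s+1)*(n+1)+1) * F := by
            rw [addA, hfs, hF]
        _ ≡ ((n+1) * c^n * F) * (c - F) + c^(n+1) * F [ZMOD F^2] :=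
            ((ihA.mul_right _).add (ihB.mul_right _))
        _ ≡ (n+2) * c^(n+1) * F [ZMOD F^2] := by
            have : ((n+1) * c^n * F) * (c - F) + c^(n+1) * F
                = (n+2) * c^(n+1) * F + (-(n+1) * c^n) * F^2 := by push_cast; ring
            rw [this]
            exact modeq_add_mul_self _ _ _
    · calc (Nat.fib ((s+1)*(n+2)+1) : ℤ)
          = Nat.fib ((s+1)*(n+1)) * F + Nat.fib ((s+1)*(n+1)+1) * c := by
            rw [addB, hF, hc]
        _ ≡ ((n+1) * c^n * F) * F + c^(n+1) * c [ZMOD F^2] :=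
            ((ihA.mul_right _).add (ihB.mul_right _))
        _ ≡ c^(n+2) [ZMOD F^2] := by
            have : ((n+1) * c^n * F) * F + c^(n+1) * c = c^(n+2) + ((n+1) * c^n) * F^2 := by
              push_cast; ring
            rw [this]
            exact modeq_add_mul_self _ _ _

/-- If `m ∣ F_r` and `p ∣ F_r` then `m p ∣ F_{rp}` (for `r, p ≥ 1`). -/
lemma mul_dvd_fib_mul (m p r : ℕ) (hr : 0 < r) (hp : 0 < p)
    (hm : m ∣ Nat.fib r) (hpf : p ∣ Nat.fib r) : m * p ∣ Nat.fib (r * p) := by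
  obtain ⟨s, rfl⟩ : ∃ s, r = s + 1 := ⟨r - 1, by omega⟩
  obtain ⟨n, rfl⟩ : ∃ n, p = n + 1 := ⟨p - 1, by omega⟩
  have h := (fib_mul_modeq s n).1
  rw [Int.ModEq] at h
  obtain ⟨t, ht⟩ : ((Nat.fib (s+1) : ℤ))^2 ∣
      (Nat.fib ((s+1)*(n+1)) : ℤ) - (n+1) * (Nat.fib (s+2))^n * Nat.fib (s+1) :=
    Int.ModEq.dvd ((fib_mul_modeq s n).1).symm
  have key : (Nat.fib ((s+1)*(n+1)) : ℤ)
      = (n+1) * (Nat.fib (s+2))^n * Nat.fib (s+1) + (Nat.fib (s+1))^2 * t := by linarith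
  have hmz : (m : ℤ) ∣ (Nat.fib (s+1) : ℤ) := Int.natCast_dvd_natCast.mpr hm
  have hpz : ((n+1 : ℕ) : ℤ) ∣ (Nat.fib (s+1) : ℤ) := Int.natCast_dvd_natCast.mpr hpf
  have : ((m * (n+1) : ℕ) : ℤ) ∣ (Nat.fib ((s+1)*(n+1)) : ℤ) := by
    rw [key]
    push_cast
    refine dvd_add ?_ ?_
    · obtain ⟨u, hu⟩ := hmz
      refine ⟨(Nat.fib (s+2))^n * u, ?_⟩
      push_cast at hu ⊢
      rw [hu]; ring
    · obtain ⟨u, hu⟩ := hmz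
      obtain ⟨v, hv⟩ := hpz
      refine ⟨u * v * t, ?_⟩
      push_cast at hu hv ⊢
      rw [pow_two]
      nth_rewrite 1 [hu]
      nth_rewrite 1 [hv]
      ring
  exact_mod_cast Int.natCast_dvd_natCast.mp this

/-- For a prime `p` dividing `k`, `fibL (k*p) ∣ p * fibL k`. -/
lemma fibL_mul_dvd (k p : ℕ) (hk : 0 < k) (hp : p.Prime) (hpk : p ∣ k) :
    fibL (k * p) ∣ p * fibL k := by
  have hz := fibZ_pos k hk
  have hkp : 0 < k * p := Nat.mul_pos hk hp.pos
  have hkf : k ∣ Nat.fib (fibZ k) := dvd_fib_fibZ k hk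
  have hpf : p ∣ Nat.fib (fibZ k) := hpk.trans hkf
  have hdvd : k * p ∣ Nat.fib (fibZ k * p) := mul_dvd_fib_mul k p (fibZ k) hz hp.pos hkf hpf
  have hzdvd : fibZ (k * p) ∣ fibZ k * p := by
    rw [← dvd_fib_iff (k*p) _ hkp (Nat.mul_pos hz hp.pos)]
    exact hdvd
  refine Nat.lcm_dvd ?_ ?_
  · obtain ⟨c, hc⟩ := Nat.dvd_lcm_left k (fibZ k)
    exact ⟨c, by rw [fibL, hc]; ring⟩
  · exact hzdvd.trans (by
      rw [Nat.mul_comm (fibZ k) p]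
      exact Nat.mul_dvd_mul_left p (Nat.dvd_lcm_right _ _))

/-- Characterization of membership in `fibA k`. -/
lemma mem_fibA_iff (k n : ℕ) (hk : 0 < k) (hn : 0 < n) :
    Nat.gcd n (Nat.fib n) = k ↔
      fibL k ∣ n ∧ ∀ p : ℕ, p.Prime → ¬ fibL (k * p) ∣ n := by
  have heq : ∀ d : ℕ, 0 < d → (d ∣ Nat.gcd n (Nat.fib n) ↔ fibL d ∣ n) :=
    fun d hd => dvd_gcd_fib_iff d n hd hn
  constructor
  · intro h
    refine ⟨(heq k hk).mp (h ▸ dvd_rfl), fun p hp hdvd => ?_⟩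
    have : k * p ∣ Nat.gcd n (Nat.fib n) := (heq (k*p) (Nat.mul_pos hk hp.pos)).mpr hdvd
    rw [h] at this
    have := Nat.le_of_dvd hk this
    nlinarith [hp.two_le, hk]
  · rintro ⟨h1, h2⟩
    have hkg : k ∣ Nat.gcd n (Nat.fib n) := (heq k hk).mpr h1
    obtain ⟨t, ht⟩ := hkg
    have hgpos : 0 < Nat.gcd n (Nat.fib n) := Nat.gcd_pos_of_pos_left _ hn
    have htpos : 0 < t := by
      rcases Nat.eq_zero_or_pos t with h0 | h0
      · rw [h0, Nat.mul_zero] at ht; omega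
      · exact h0
    rcases Nat.eq_or_lt_of_le htpos with h1' | h1'
    · rw [ht, ← h1', Nat.mul_one]
    · exfalso
      obtain ⟨p, hp, hpt⟩ := Nat.exists_prime_and_dvd (by omega : t ≠ 1)
      have hkpg : k * p ∣ Nat.gcd n (Nat.fib n) := by
        rw [ht]; exact Nat.mul_dvd_mul_left k hpt
      exact h2 p hp ((heq (k*p) (Nat.mul_pos hk hp.pos)).mp hkpg)

/-- If `fibA k` is nonempty and `p ∣ k` is prime, then `fibL (k*p) = p * fibL k`. -/
lemma fibL_mul_eq (k p : ℕ) (hk : 0 < k) (hp : p.Prime) (hpk : p ∣ k)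
    (hA : (fibA k).Nonempty) : fibL (k * p) = p * fibL k := by
  obtain ⟨n₀, hn₀, hg₀⟩ := hA
  obtain ⟨h1, h2⟩ := (mem_fibA_iff k n₀ hk hn₀).mp hg₀
  have hkp : 0 < k * p := Nat.mul_pos hk hp.pos
  have hd1 : fibL k ∣ fibL (k * p) := fibL_dvd_fibL k (k*p) hk (dvd_mul_right k p) hkp
  have hd2 : fibL (k * p) ∣ p * fibL k := fibL_mul_dvd k p hk hp hpk
  obtain ⟨c, hc⟩ := hd1
  have hLpos := fibL_pos k hk
  have hcp : c ∣ p := by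
    have : fibL k * c ∣ fibL k * p := by rw [← hc, Nat.mul_comm (fibL k) p]; exact hd2
    exact (Nat.mul_dvd_mul_iff_left hLpos).mp this
  rcases (Nat.dvd_prime hp).mp hcp with h1' | h1'
  · exfalso
    apply h2 p hp
    rw [hc, h1', Nat.mul_one]
    exact h1
  · rw [hc, h1', Nat.mul_comm]

theorem fibA_eq_scaled_nonmultiples (k : ℕ) (hk : 0 < k) (hA : (fibA k).Nonempty) :
    fibA k = (fun m => fibL k * m) ''
      {m : ℕ | 0 < m ∧ ∀ s ∈ ({p : ℕ | p.Prime ∧ p ∣ k} ∪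
        {q : ℕ | ∃ p : ℕ, p.Prime ∧ ¬ p ∣ k ∧ q = fibL (k * p) / fibL k}), ¬ s ∣ m} := by
  have hLpos := fibL_pos k hk
  ext n
  simp only [fibA, Set.mem_setOf_eq, Set.mem_image, Set.mem_union]
  constructor
  · rintro ⟨hn, hg⟩
    obtain ⟨h1, h2⟩ := (mem_fibA_iff k n hk hn).mp hg
    obtain ⟨m, hm⟩ := h1
    have hmpos : 0 < m := by
      rcases Nat.eq_zero_or_pos m with h0 | h0
      · rw [h0, Nat.mul_zero] at hm; omega
      · exact h0
    refine ⟨m, ⟨hmpos, ?_⟩, hm.symm⟩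
    rintro s (⟨hsp, hsk⟩ | ⟨p, hp, hpk, hq⟩) hsm
    · -- s is a prime dividing k
      apply h2 s hsp
      rw [fibL_mul_eq k s hk hsp hsk hA, hm]
      obtain ⟨u, hu⟩ := hsm
      exact ⟨u, by rw [hu]; ring⟩
    · -- s = fibL (k*p) / fibL k with p ∤ k
      have hkp : 0 < k * p := Nat.mul_pos hk hp.pos
      obtain ⟨c, hc⟩ := fibL_dvd_fibL k (k*p) hk (dvd_mul_right k p) hkp
      have hsc : s = c := by rw [hq, hc, Nat.mul_div_cancel_left _ hLpos]
      apply h2 p hp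
      rw [hc, hm]
      obtain ⟨u, hu⟩ := hsm
      exact ⟨u, by rw [hu, hsc]; ring⟩
  · rintro ⟨m, ⟨hmpos, hcond⟩, rfl⟩
    refine ⟨Nat.mul_pos hLpos hmpos, ?_⟩
    rw [mem_fibA_iff k _ hk (Nat.mul_pos hLpos hmpos)]
    refine ⟨Dvd.intro m rfl, fun p hp hdvd => ?_⟩
    by_cases hpk : p ∣ k
    · have heq := fibL_mul_eq k p hk hp hpk hA
      rw [heq, Nat.mul_comm p (fibL k)] at hdvd
      have : p ∣ m := (Nat.mul_dvd_mul_iff_left hLpos).mp hdvd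
      exact hcond p (Or.inl ⟨hp, hpk⟩) this
    · have hkp : 0 < k * p := Nat.mul_pos hk hp.pos
      obtain ⟨c, hc⟩ := fibL_dvd_fibL k (k*p) hk (dvd_mul_right k p) hkp
      rw [hc] at hdvd
      have : c ∣ m := (Nat.mul_dvd_mul_iff_left hLpos).mp hdvd
      refine hcond c (Or.inr ⟨p, hp, hpk, ?_⟩) this
      rw [hc, Nat.mul_div_cancel_left _ hLpos]
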